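/- There exist κ > 0 and C > 0, depending only on c1, c2, σ0, σ1, such that for every Φ ∈ ℝ⁴ with |Φ| < 2κ and φ2 ≠ 0, the coefficient γ²₁₃(Φ) := −(λ1(Φ) − λ3(Φ)) · l2(Φ) · (Dr1(Φ) r3(Φ)) satisfies |γ²₁₃(Φ)| ≤ C; i.e., despite the factor 1/N(Φ) in l2 with N(Φ) → 0 as φ2 → 0, this coefficient remains uniformly bounded on the punctured ball. -/

import Mathlib

noncomputable section

open Real Matrix Set

namespace ElasticIP

/-- Euclidean norm on `ℝ⁴` (presented as `Fin 4 → ℝ`). -/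
def eucNorm4 (Φ : Fin 4 → ℝ) : ℝ := Real.sqrt (∑ i, (Φ i) ^ 2)

/-- `a(Φ) = c₁² + 2σ₀φ₁`. -/
def aF (c1 σ0 : ℝ) (Φ : Fin 4 → ℝ) : ℝ := c1 ^ 2 + 2 * σ0 * Φ 0

/-- `b(Φ) = c₂² + 2σ₁φ₁`. -/
def bF (c2 σ1 : ℝ) (Φ : Fin 4 → ℝ) : ℝ := c2 ^ 2 + 2 * σ1 * Φ 0

/-- `c(Φ) = 2σ₁φ₂`. -/
def cF (σ1 : ℝ) (Φ : Fin 4 → ℝ) : ℝ := 2 * σ1 * Φ 1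

/-- `Δ = (a-b)² + 4c²`. -/
def ΔF (c1 c2 σ0 σ1 : ℝ) (Φ : Fin 4 → ℝ) : ℝ :=
  (aF c1 σ0 Φ - bF c2 σ1 Φ) ^ 2 + 4 * cF σ1 Φ ^ 2

/-- The coefficient matrix `A(Φ)` of the first-order system. -/
def AM (c1 c2 σ0 σ1 : ℝ) (Φ : Fin 4 → ℝ) : Matrix (Fin 4) (Fin 4) ℝ :=
  !![0, 0, -1, 0;
     0, 0, 0, -1;
     -aF c1 σ0 Φ, -cF σ1 Φ, 0, 0;
     -cF σ1 Φ, -bF c2 σ1 Φ, 0, 0]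

/-- `λ₁ = √(((a+b)+√Δ)/2)`. -/
def lam1 (c1 c2 σ0 σ1 : ℝ) (Φ : Fin 4 → ℝ) : ℝ :=
  Real.sqrt ((aF c1 σ0 Φ + bF c2 σ1 Φ + Real.sqrt (ΔF c1 c2 σ0 σ1 Φ)) / 2)

/-- `λ₂ = √(((a+b)-√Δ)/2)`. -/
def lam2 (c1 c2 σ0 σ1 : ℝ) (Φ : Fin 4 → ℝ) : ℝ :=
  Real.sqrt ((aF c1 σ0 Φ + bF c2 σ1 Φ - Real.sqrt (ΔF c1 c2 σ0 σ1 Φ)) / 2)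

/-- `λ₃ = -λ₂`. -/
def lam3 (c1 c2 σ0 σ1 : ℝ) (Φ : Fin 4 → ℝ) : ℝ := - lam2 c1 c2 σ0 σ1 Φ

/-- `λ₄ = -λ₁`. -/
def lam4 (c1 c2 σ0 σ1 : ℝ) (Φ : Fin 4 → ℝ) : ℝ := - lam1 c1 c2 σ0 σ1 Φ

/-- Right eigenvector `r₁`. -/
def r1 (c1 c2 σ0 σ1 : ℝ) (Φ : Fin 4 → ℝ) : Fin 4 → ℝ :=
  ![(lam1 c1 c2 σ0 σ1 Φ ^ 2 - bF c2 σ1 Φ) / (2 * σ1),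
    Φ 1,
    -(lam1 c1 c2 σ0 σ1 Φ * (lam1 c1 c2 σ0 σ1 Φ ^ 2 - bF c2 σ1 Φ)) / (2 * σ1),
    -(lam1 c1 c2 σ0 σ1 Φ) * Φ 1]

/-- Right eigenvector `r₂`. -/
def r2 (c1 c2 σ0 σ1 : ℝ) (Φ : Fin 4 → ℝ) : Fin 4 → ℝ :=
  ![(lam2 c1 c2 σ0 σ1 Φ ^ 2 - bF c2 σ1 Φ) / (2 * σ1),
    Φ 1,
    -(lam2 c1 c2 σ0 σ1 Φ * (lam2 c1 c2 σ0 σ1 Φ ^ 2 - bF c2 σ1 Φ)) / (2 * σ1),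
    -(lam2 c1 c2 σ0 σ1 Φ) * Φ 1]

/-- Right eigenvector `r₃`. -/
def r3 (c1 c2 σ0 σ1 : ℝ) (Φ : Fin 4 → ℝ) : Fin 4 → ℝ :=
  ![(lam2 c1 c2 σ0 σ1 Φ ^ 2 - bF c2 σ1 Φ) / (2 * σ1),
    Φ 1,
    lam2 c1 c2 σ0 σ1 Φ * (lam2 c1 c2 σ0 σ1 Φ ^ 2 - bF c2 σ1 Φ) / (2 * σ1),
    lam2 c1 c2 σ0 σ1 Φ * Φ 1]

/-- Right eigenvector `r₄`. -/
def r4 (c1 c2 σ0 σ1 : ℝ) (Φ : Fin 4 → ℝ) : Fin 4 → ℝ :=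
  ![(lam1 c1 c2 σ0 σ1 Φ ^ 2 - bF c2 σ1 Φ) / (2 * σ1),
    Φ 1,
    lam1 c1 c2 σ0 σ1 Φ * (lam1 c1 c2 σ0 σ1 Φ ^ 2 - bF c2 σ1 Φ) / (2 * σ1),
    lam1 c1 c2 σ0 σ1 Φ * Φ 1]

/-- `K = (Δ + (a-b)√Δ)/(4σ₁²)`. -/
def KF (c1 c2 σ0 σ1 : ℝ) (Φ : Fin 4 → ℝ) : ℝ :=
  (ΔF c1 c2 σ0 σ1 Φ + (aF c1 σ0 Φ - bF c2 σ1 Φ) * Real.sqrt (ΔF c1 c2 σ0 σ1 Φ)) / (4 * σ1 ^ 2)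

/-- `N = (Δ - (a-b)√Δ)/(4σ₁²)`. -/
def NF (c1 c2 σ0 σ1 : ℝ) (Φ : Fin 4 → ℝ) : ℝ :=
  (ΔF c1 c2 σ0 σ1 Φ - (aF c1 σ0 Φ - bF c2 σ1 Φ) * Real.sqrt (ΔF c1 c2 σ0 σ1 Φ)) / (4 * σ1 ^ 2)

/-- Left eigenvector `l₁`. -/
def l1 (c1 c2 σ0 σ1 : ℝ) (Φ : Fin 4 → ℝ) : Fin 4 → ℝ :=
  (KF c1 c2 σ0 σ1 Φ)⁻¹ •
    ![(lam1 c1 c2 σ0 σ1 Φ ^ 2 - bF c2 σ1 Φ) / (2 * σ1),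
      Φ 1,
      -((lam1 c1 c2 σ0 σ1 Φ ^ 2 - bF c2 σ1 Φ) / (2 * σ1 * lam1 c1 c2 σ0 σ1 Φ)),
      -(Φ 1 / lam1 c1 c2 σ0 σ1 Φ)]

/-- Left eigenvector `l₂`. -/
def l2 (c1 c2 σ0 σ1 : ℝ) (Φ : Fin 4 → ℝ) : Fin 4 → ℝ :=
  (NF c1 c2 σ0 σ1 Φ)⁻¹ •
    ![(lam2 c1 c2 σ0 σ1 Φ ^ 2 - bF c2 σ1 Φ) / (2 * σ1),
      Φ 1,
      -((lam2 c1 c2 σ0 σ1 Φ ^ 2 - bF c2 σ1 Φ) / (2 * σ1 * lam2 c1 c2 σ0 σ1 Φ)),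
      -(Φ 1 / lam2 c1 c2 σ0 σ1 Φ)]

/-- Left eigenvector `l₃`. -/
def l3 (c1 c2 σ0 σ1 : ℝ) (Φ : Fin 4 → ℝ) : Fin 4 → ℝ :=
  (NF c1 c2 σ0 σ1 Φ)⁻¹ •
    ![(lam2 c1 c2 σ0 σ1 Φ ^ 2 - bF c2 σ1 Φ) / (2 * σ1),
      Φ 1,
      (lam2 c1 c2 σ0 σ1 Φ ^ 2 - bF c2 σ1 Φ) / (2 * σ1 * lam2 c1 c2 σ0 σ1 Φ),
      Φ 1 / lam2 c1 c2 σ0 σ1 Φ]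

/-- Left eigenvector `l₄`. -/
def l4 (c1 c2 σ0 σ1 : ℝ) (Φ : Fin 4 → ℝ) : Fin 4 → ℝ :=
  (KF c1 c2 σ0 σ1 Φ)⁻¹ •
    ![(lam1 c1 c2 σ0 σ1 Φ ^ 2 - bF c2 σ1 Φ) / (2 * σ1),
      Φ 1,
      (lam1 c1 c2 σ0 σ1 Φ ^ 2 - bF c2 σ1 Φ) / (2 * σ1 * lam1 c1 c2 σ0 σ1 Φ),
      Φ 1 / lam1 c1 c2 σ0 σ1 Φ]

/-- Indexed eigenvalues `λᵢ`, `i = 1,…,4` realised as `i : Fin 4`. -/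
def lamI (c1 c2 σ0 σ1 : ℝ) (i : Fin 4) (Φ : Fin 4 → ℝ) : ℝ :=
  match i with
  | 0 => lam1 c1 c2 σ0 σ1 Φ
  | 1 => lam2 c1 c2 σ0 σ1 Φ
  | 2 => lam3 c1 c2 σ0 σ1 Φ
  | 3 => lam4 c1 c2 σ0 σ1 Φ

/-- Indexed right eigenvectors `rᵢ`. -/
def rI (c1 c2 σ0 σ1 : ℝ) (i : Fin 4) (Φ : Fin 4 → ℝ) : Fin 4 → ℝ :=
  match i with
  | 0 => r1 c1 c2 σ0 σ1 Φ
  | 1 => r2 c1 c2 σ0 σ1 Φ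
  | 2 => r3 c1 c2 σ0 σ1 Φ
  | 3 => r4 c1 c2 σ0 σ1 Φ

/-- Indexed left eigenvectors `lᵢ`. -/
def lI (c1 c2 σ0 σ1 : ℝ) (i : Fin 4) (Φ : Fin 4 → ℝ) : Fin 4 → ℝ :=
  match i with
  | 0 => l1 c1 c2 σ0 σ1 Φ
  | 1 => l2 c1 c2 σ0 σ1 Φ
  | 2 => l3 c1 c2 σ0 σ1 Φ
  | 3 => l4 c1 c2 σ0 σ1 Φ

/-- Jacobian matrix of a map `ℝ⁴ → ℝ⁴`. -/
def jac (f : (Fin 4 → ℝ) → (Fin 4 → ℝ)) (Φ : Fin 4 → ℝ) : Matrix (Fin 4) (Fin 4) ℝ :=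
  fun i j => fderiv ℝ (fun Ψ => f Ψ i) Φ (Pi.single j 1)

/-- `cⁱᵢₘ(Φ) = ∇λᵢ(Φ) · rₘ(Φ)`. -/
def cCo (c1 c2 σ0 σ1 : ℝ) (i m : Fin 4) (Φ : Fin 4 → ℝ) : ℝ :=
  fderiv ℝ (lamI c1 c2 σ0 σ1 i) Φ (rI c1 c2 σ0 σ1 m Φ)

/-- `γⁱᵢₘ(Φ) = -(λᵢ-λₘ) lᵢ · (Drᵢ rₘ - Drₘ rᵢ)`. -/
def gammaII (c1 c2 σ0 σ1 : ℝ) (i m : Fin 4) (Φ : Fin 4 → ℝ) : ℝ :=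
  -(lamI c1 c2 σ0 σ1 i Φ - lamI c1 c2 σ0 σ1 m Φ) *
    (lI c1 c2 σ0 σ1 i Φ ⬝ᵥ
      (jac (rI c1 c2 σ0 σ1 i) Φ *ᵥ rI c1 c2 σ0 σ1 m Φ -
        jac (rI c1 c2 σ0 σ1 m) Φ *ᵥ rI c1 c2 σ0 σ1 i Φ))

/-- `γⁱₖₘ(Φ) = -(λₖ-λₘ) lᵢ · (Drₖ rₘ)`. -/
def gammaKM (c1 c2 σ0 σ1 : ℝ) (i k m : Fin 4) (Φ : Fin 4 → ℝ) : ℝ :=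
  -(lamI c1 c2 σ0 σ1 k Φ - lamI c1 c2 σ0 σ1 m Φ) *
    (lI c1 c2 σ0 σ1 i Φ ⬝ᵥ (jac (rI c1 c2 σ0 σ1 k) Φ *ᵥ rI c1 c2 σ0 σ1 m Φ))


/-! ### Auxiliary development -/

section Aux
variable (c1 c2 σ0 σ1 : ℝ)

/-- `√Δ`. -/
def sqD (Φ : Fin 4 → ℝ) : ℝ := Real.sqrt (ΔF c1 c2 σ0 σ1 Φ)

/-- The good open set. -/
def USet : Set (Fin 4 → ℝ) :=
  {Φ | 0 < aF c1 σ0 Φ - bF c2 σ1 Φ ∧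
      0 < (aF c1 σ0 Φ + bF c2 σ1 Φ - sqD c1 c2 σ0 σ1 Φ) / 2}

/-- `q = (λ₁² - b)/(2σ₁)`, first component of `r1`. -/
def qFn (Φ : Fin 4 → ℝ) : ℝ := (lam1 c1 c2 σ0 σ1 Φ ^ 2 - bF c2 σ1 Φ) / (2 * σ1)

/-- `s = (λ₂² - a)/(2σ₁)`. -/
def sFn (Φ : Fin 4 → ℝ) : ℝ := (lam2 c1 c2 σ0 σ1 Φ ^ 2 - aF c1 σ0 Φ) / (2 * σ1)

/-- `p = (λ₂² - b)/(2σ₁)`. -/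
def pFn (Φ : Fin 4 → ℝ) : ℝ := (lam2 c1 c2 σ0 σ1 Φ ^ 2 - bF c2 σ1 Φ) / (2 * σ1)

def v1F (Φ : Fin 4 → ℝ) : ℝ := fderiv ℝ (qFn c1 c2 σ0 σ1) Φ (r3 c1 c2 σ0 σ1 Φ)
def wF (Φ : Fin 4 → ℝ) : ℝ := fderiv ℝ (lam1 c1 c2 σ0 σ1) Φ (r3 c1 c2 σ0 σ1 Φ)

/-- The regular (continuous) expression for `γ²₁₃`. -/
def GF (Φ : Fin 4 → ℝ) : ℝ :=
  (lam1 c1 c2 σ0 σ1 Φ + lam2 c1 c2 σ0 σ1 Φ) * (σ1 / sqD c1 c2 σ0 σ1 Φ) *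
    (v1F c1 c2 σ0 σ1 Φ + sFn c1 c2 σ0 σ1 Φ +
      (lam1 c1 c2 σ0 σ1 Φ * v1F c1 c2 σ0 σ1 Φ + qFn c1 c2 σ0 σ1 Φ * wF c1 c2 σ0 σ1 Φ) /
        lam2 c1 c2 σ0 σ1 Φ +
      sFn c1 c2 σ0 σ1 Φ * (wF c1 c2 σ0 σ1 Φ + lam1 c1 c2 σ0 σ1 Φ) / lam2 c1 c2 σ0 σ1 Φ)

lemma contDiff_ΔF : ContDiff ℝ 1 (ΔF c1 c2 σ0 σ1) := by
  unfold ΔF aF bF cF; fun_prop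

lemma continuous_sqD : Continuous (sqD c1 c2 σ0 σ1) :=
  Real.continuous_sqrt.comp (contDiff_ΔF c1 c2 σ0 σ1).continuous

lemma isOpen_USet : IsOpen (USet c1 c2 σ0 σ1) := by
  have h1 : Continuous (fun Φ => aF c1 σ0 Φ - bF c2 σ1 Φ) := by unfold aF bF; fun_prop
  have h2 : Continuous (fun Φ =>
      (aF c1 σ0 Φ + bF c2 σ1 Φ - sqD c1 c2 σ0 σ1 Φ) / 2) := by
    have := continuous_sqD c1 c2 σ0 σ1
    have ha : Continuous (aF c1 σ0) := by unfold aF; fun_prop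
    have hb : Continuous (bF c2 σ1) := by unfold bF; fun_prop
    fun_prop
  exact (isOpen_lt continuous_const h1).inter (isOpen_lt continuous_const h2)

lemma zero_mem_USet (hc2 : 0 < c2) (hc12 : c2 < c1) : (0 : Fin 4 → ℝ) ∈ USet c1 c2 σ0 σ1 := by
  have h1 : aF c1 σ0 0 = c1 ^ 2 := by simp [aF]
  have h2 : bF c2 σ1 0 = c2 ^ 2 := by simp [bF]
  have hsq : c2 ^ 2 < c1 ^ 2 := by nlinarith
  have hΔ : ΔF c1 c2 σ0 σ1 0 = (c1 ^ 2 - c2 ^ 2) ^ 2 := by simp [ΔF, aF, bF, cF]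
  have hs : sqD c1 c2 σ0 σ1 0 = c1 ^ 2 - c2 ^ 2 := by
    rw [sqD, hΔ, Real.sqrt_sq (by nlinarith)]
  constructor
  · simp only [h1, h2]; nlinarith
  · simp only [h1, h2, hs]; nlinarith

variable {c1 c2 σ0 σ1}

section OnU
variable {Φ : Fin 4 → ℝ}

lemma ΔF_pos (hΦ : Φ ∈ USet c1 c2 σ0 σ1) : 0 < ΔF c1 c2 σ0 σ1 Φ := by
  have h := hΦ.1
  have : 0 ≤ 4 * cF σ1 Φ ^ 2 := by positivity
  unfold ΔF; nlinarith

lemma sqD_pos (hΦ : Φ ∈ USet c1 c2 σ0 σ1) : 0 < sqD c1 c2 σ0 σ1 Φ := Real.sqrt_pos.2 (ΔF_pos hΦ)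

lemma lam2_pos (hΦ : Φ ∈ USet c1 c2 σ0 σ1) : 0 < lam2 c1 c2 σ0 σ1 Φ := Real.sqrt_pos.2 hΦ.2

lemma lam1_arg_pos (hΦ : Φ ∈ USet c1 c2 σ0 σ1) : 0 < (aF c1 σ0 Φ + bF c2 σ1 Φ + Real.sqrt (ΔF c1 c2 σ0 σ1 Φ)) / 2 := by
  have h2 := hΦ.2
  have hs : 0 ≤ sqD c1 c2 σ0 σ1 Φ := Real.sqrt_nonneg _
  rw [show Real.sqrt (ΔF c1 c2 σ0 σ1 Φ) = sqD c1 c2 σ0 σ1 Φ from rfl]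
  unfold USet at h2
  linarith [h2]

lemma lam2_sq (hΦ : Φ ∈ USet c1 c2 σ0 σ1) : lam2 c1 c2 σ0 σ1 Φ ^ 2
    = (aF c1 σ0 Φ + bF c2 σ1 Φ - sqD c1 c2 σ0 σ1 Φ) / 2 :=
  Real.sq_sqrt hΦ.2.le

lemma sqD_sq (hΦ : Φ ∈ USet c1 c2 σ0 σ1) : sqD c1 c2 σ0 σ1 Φ ^ 2 = ΔF c1 c2 σ0 σ1 Φ :=
  Real.sq_sqrt (ΔF_pos hΦ).le

lemma contDiffAt_sqD (hΦ : Φ ∈ USet c1 c2 σ0 σ1) : ContDiffAt ℝ 1 (sqD c1 c2 σ0 σ1) Φ := by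
  have h := (Real.contDiffAt_sqrt (n := 1) (ΔF_pos hΦ).ne').comp Φ
    (contDiff_ΔF c1 c2 σ0 σ1).contDiffAt
  exact h

lemma contDiffAt_lam1 (hΦ : Φ ∈ USet c1 c2 σ0 σ1) : ContDiffAt ℝ 1 (lam1 c1 c2 σ0 σ1) Φ := by
  have harg : ContDiffAt ℝ 1
      (fun Ψ => (aF c1 σ0 Ψ + bF c2 σ1 Ψ + Real.sqrt (ΔF c1 c2 σ0 σ1 Ψ)) / 2) Φ := by
    have h1 : ContDiff ℝ 1 (fun Ψ : Fin 4 → ℝ => aF c1 σ0 Ψ + bF c2 σ1 Ψ) := by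
      unfold aF bF; fun_prop
    exact ((h1.contDiffAt.add (contDiffAt_sqD hΦ)).div_const 2)
  exact (Real.contDiffAt_sqrt (lam1_arg_pos hΦ).ne').comp Φ harg

lemma contDiffAt_lam2 (hΦ : Φ ∈ USet c1 c2 σ0 σ1) : ContDiffAt ℝ 1 (lam2 c1 c2 σ0 σ1) Φ := by
  have harg : ContDiffAt ℝ 1
      (fun Ψ => (aF c1 σ0 Ψ + bF c2 σ1 Ψ - Real.sqrt (ΔF c1 c2 σ0 σ1 Ψ)) / 2) Φ := by
    have h1 : ContDiff ℝ 1 (fun Ψ : Fin 4 → ℝ => aF c1 σ0 Ψ + bF c2 σ1 Ψ) := by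
      unfold aF bF; fun_prop
    exact ((h1.contDiffAt.sub (contDiffAt_sqD hΦ)).div_const 2)
  exact (Real.contDiffAt_sqrt hΦ.2.ne').comp Φ harg

lemma contDiffAt_qFn (hΦ : Φ ∈ USet c1 c2 σ0 σ1) : ContDiffAt ℝ 1 (qFn c1 c2 σ0 σ1) Φ := by
  have hb : ContDiffAt ℝ 1 (bF c2 σ1) Φ := by
    have : ContDiff ℝ 1 (bF c2 σ1) := by unfold bF; fun_prop
    exact this.contDiffAt
  exact (((contDiffAt_lam1 hΦ).pow 2).sub hb).div_const _

end OnU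

/-- Key computation of the matrix-vector product via directional derivatives. -/
lemma jac_mulVec_apply (f : (Fin 4 → ℝ) → (Fin 4 → ℝ)) (Φ u : Fin 4 → ℝ) (i : Fin 4) :
    (jac f Φ *ᵥ u) i = fderiv ℝ (fun Ψ => f Ψ i) Φ u := by
  have hu : u = ∑ j : Fin 4, u j • (Pi.single j 1 : Fin 4 → ℝ) := by
    funext k; simp [Pi.single_apply, Finset.sum_ite_eq]
  conv_rhs => rw [hu]
  rw [map_sum]
  simp [jac, Matrix.mulVec, dotProduct, mul_comm]

lemma fderiv_proj1 (Φ u : Fin 4 → ℝ) :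
    fderiv ℝ (fun Ψ : Fin 4 → ℝ => Ψ 1) Φ u = u 1 := by
  have h : (fun Ψ : Fin 4 → ℝ => Ψ 1)
      = ⇑(ContinuousLinearMap.proj (R:=ℝ) (φ := fun _ : Fin 4 => ℝ) 1) := rfl
  rw [h, ContinuousLinearMap.fderiv]
  rfl

lemma diff_proj1 (Φ : Fin 4 → ℝ) : DifferentiableAt ℝ (fun Ψ : Fin 4 → ℝ => Ψ 1) Φ :=
  (ContinuousLinearMap.proj (R:=ℝ) (φ := fun _ : Fin 4 => ℝ) 1).differentiableAt

variable {c1 c2 σ0 σ1 : ℝ} {Φ : Fin 4 → ℝ}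

/-- The matrix-vector product `Dr₁(Φ) r₃(Φ)` computed explicitly. -/
lemma jac_r1_mulVec (hΦ : Φ ∈ USet c1 c2 σ0 σ1) :
    jac (r1 c1 c2 σ0 σ1) Φ *ᵥ r3 c1 c2 σ0 σ1 Φ =
      ![v1F c1 c2 σ0 σ1 Φ,
        Φ 1,
        -(lam1 c1 c2 σ0 σ1 Φ * v1F c1 c2 σ0 σ1 Φ + qFn c1 c2 σ0 σ1 Φ * wF c1 c2 σ0 σ1 Φ),
        -(lam1 c1 c2 σ0 σ1 Φ * Φ 1 + Φ 1 * wF c1 c2 σ0 σ1 Φ)] := by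
  have hq := (contDiffAt_qFn hΦ).differentiableAt one_ne_zero
  have hl1 := (contDiffAt_lam1 hΦ).differentiableAt one_ne_zero
  have h0 : (fun Ψ => r1 c1 c2 σ0 σ1 Ψ 0) = qFn c1 c2 σ0 σ1 := by
    funext Ψ; simp [r1, qFn]
  have h1 : (fun Ψ => r1 c1 c2 σ0 σ1 Ψ 1) = (fun Ψ : Fin 4 → ℝ => Ψ 1) := by
    funext Ψ; simp [r1]
  have h2 : (fun Ψ => r1 c1 c2 σ0 σ1 Ψ 2)
      = (fun Ψ => -(lam1 c1 c2 σ0 σ1 Ψ * qFn c1 c2 σ0 σ1 Ψ)) := by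
    funext Ψ; simp [r1, qFn]; ring
  have h3 : (fun Ψ => r1 c1 c2 σ0 σ1 Ψ 3)
      = (fun Ψ => -(lam1 c1 c2 σ0 σ1 Ψ * Ψ 1)) := by
    funext Ψ; simp [r1]
  have hr31 : r3 c1 c2 σ0 σ1 Φ 1 = Φ 1 := by simp [r3]
  have e0 : (jac (r1 c1 c2 σ0 σ1) Φ *ᵥ r3 c1 c2 σ0 σ1 Φ) 0 = v1F c1 c2 σ0 σ1 Φ := by
    rw [jac_mulVec_apply, h0]; rfl
  have e1 : (jac (r1 c1 c2 σ0 σ1) Φ *ᵥ r3 c1 c2 σ0 σ1 Φ) 1 = Φ 1 := by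
    rw [jac_mulVec_apply, h1, fderiv_proj1, hr31]
  have e2 : (jac (r1 c1 c2 σ0 σ1) Φ *ᵥ r3 c1 c2 σ0 σ1 Φ) 2
      = -(lam1 c1 c2 σ0 σ1 Φ * v1F c1 c2 σ0 σ1 Φ + qFn c1 c2 σ0 σ1 Φ * wF c1 c2 σ0 σ1 Φ) := by
    rw [jac_mulVec_apply, h2, fderiv_fun_neg, fderiv_fun_mul hl1 hq]
    simp [v1F, wF, qFn]
  have e3 : (jac (r1 c1 c2 σ0 σ1) Φ *ᵥ r3 c1 c2 σ0 σ1 Φ) 3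
      = -(lam1 c1 c2 σ0 σ1 Φ * Φ 1 + Φ 1 * wF c1 c2 σ0 σ1 Φ) := by
    rw [jac_mulVec_apply, h3, fderiv_fun_neg, fderiv_fun_mul hl1 (diff_proj1 Φ)]
    simp [wF, fderiv_proj1, hr31]
  funext i
  fin_cases i
  · exact e0
  · exact e1
  · exact e2
  · exact e3

/-- Pointwise identity: the gamma coefficient equals the regular expression `GF`. -/
lemma gamma_eq_GF (hσ1 : σ1 ≠ 0) (hΦ : Φ ∈ USet c1 c2 σ0 σ1) (hφ2 : Φ 1 ≠ 0) :
    -(lam1 c1 c2 σ0 σ1 Φ - lam3 c1 c2 σ0 σ1 Φ) *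
        (l2 c1 c2 σ0 σ1 Φ ⬝ᵥ (jac (r1 c1 c2 σ0 σ1) Φ *ᵥ r3 c1 c2 σ0 σ1 Φ))
      = GF c1 c2 σ0 σ1 Φ := by
  have hS : 0 < sqD c1 c2 σ0 σ1 Φ := sqD_pos hΦ
  have hL2 : 0 < lam2 c1 c2 σ0 σ1 Φ := lam2_pos hΦ
  have hab : 0 < aF c1 σ0 Φ - bF c2 σ1 Φ := hΦ.1
  have hL2sq := lam2_sq hΦ
  have hSsq : sqD c1 c2 σ0 σ1 Φ ^ 2
      = (aF c1 σ0 Φ - bF c2 σ1 Φ) ^ 2 + 4 * (2 * σ1 * Φ 1) ^ 2 := by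
    rw [sqD_sq hΦ, ΔF, cF]
  set A := aF c1 σ0 Φ with hA
  set B := bF c2 σ1 Φ with hB
  set S := sqD c1 c2 σ0 σ1 Φ with hSdef
  set L1 := lam1 c1 c2 σ0 σ1 Φ with hL1def
  set L2 := lam2 c1 c2 σ0 σ1 Φ with hL2def
  set v1 := v1F c1 c2 σ0 σ1 Φ with hv1def
  set w := wF c1 c2 σ0 σ1 Φ with hwdef
  -- strict inequality S > A - B since φ2 ≠ 0
  have hSgt : A - B < S := by
    have hpos : 0 < σ1 ^ 2 * Φ 1 ^ 2 := by positivity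
    nlinarith [hpos, hSsq, hS, hab]
  have hL2B : L2 ^ 2 - B ≠ 0 := by rw [hL2sq]; intro h; nlinarith
  -- the two key algebraic identities
  have hprod : (L2 ^ 2 - B) * (L2 ^ 2 - A) = 4 * σ1 ^ 2 * Φ 1 ^ 2 := by
    rw [hL2sq]
    linear_combination (1/4 : ℝ) * hSsq
  have hNval : NF c1 c2 σ0 σ1 Φ = -(S * ((L2 ^ 2 - B) / (2 * σ1))) / σ1 := by
    have hL2Bv : L2 ^ 2 - B = (A - B - S) / 2 := by rw [hL2sq]; ring
    rw [NF]
    rw [show Real.sqrt (ΔF c1 c2 σ0 σ1 Φ) = S from rfl]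
    rw [show ΔF c1 c2 σ0 σ1 Φ = S ^ 2 from (sqD_sq hΦ).symm]
    rw [hL2Bv]
    field_simp
    ring
  have hv := jac_r1_mulVec hΦ
  rw [hv]
  have hdot : l2 c1 c2 σ0 σ1 Φ ⬝ᵥ
      ![v1, Φ 1, -(L1 * v1 + qFn c1 c2 σ0 σ1 Φ * w), -(L1 * Φ 1 + Φ 1 * w)]
      = (NF c1 c2 σ0 σ1 Φ)⁻¹ *
        ((L2 ^ 2 - B) / (2 * σ1) * v1 + Φ 1 * Φ 1
          + (L2 ^ 2 - B) / (2 * σ1 * L2) * (L1 * v1 + qFn c1 c2 σ0 σ1 Φ * w)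
          + Φ 1 / L2 * (L1 * Φ 1 + Φ 1 * w)) := by
    simp [l2, dotProduct, Fin.sum_univ_four, ← hL2def, ← hB]
    ring
  rw [hdot, hNval, GF, lam3]
  rw [← hv1def, ← hwdef, ← hL1def, ← hL2def, ← hSdef, sFn, ← hL2def, ← hA, qFn, ← hL1def, ← hB]
  set Q := (L1 ^ 2 - B) / (2 * σ1) with hQ
  set P := (L2 ^ 2 - B) / (2 * σ1) with hPdef
  set sV := (L2 ^ 2 - A) / (2 * σ1) with hsVdef
  have hPne : P ≠ 0 := by
    rw [hPdef]
    exact div_ne_zero hL2B (by simp [hσ1])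
  have hφsq : Φ 1 * Φ 1 = P * sV := by
    rw [hPdef, hsVdef]
    rw [div_mul_div_comm]
    rw [hprod]
    field_simp
    ring
  have hdd : (L2 ^ 2 - B) / (2 * σ1 * L2) = P / L2 := by
    rw [hPdef, div_div]
  rw [hdd]
  have hD : P * v1 + Φ 1 * Φ 1 + P / L2 * (L1 * v1 + Q * w)
      + Φ 1 / L2 * (L1 * Φ 1 + Φ 1 * w)
      = P * (v1 + sV + (L1 * v1 + Q * w) / L2 + sV * (w + L1) / L2) := by
    have h2 : Φ 1 / L2 * (L1 * Φ 1 + Φ 1 * w) = (Φ 1 * Φ 1) * (L1 + w) / L2 := by ring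
    rw [h2, hφsq]
    field_simp
    ring
  rw [hD]
  set E := v1 + sV + (L1 * v1 + Q * w) / L2 + sV * (w + L1) / L2 with hE
  have hSne := hS.ne'
  field_simp
  ring

lemma continuousOn_GF (c1 c2 σ0 σ1 : ℝ) :
    ContinuousOn (GF c1 c2 σ0 σ1) (USet c1 c2 σ0 σ1) := by
  have hopen := isOpen_USet c1 c2 σ0 σ1
  have hlam1 : ContinuousOn (lam1 c1 c2 σ0 σ1) (USet c1 c2 σ0 σ1) := fun Ψ hΨ =>
    (contDiffAt_lam1 hΨ).continuousAt.continuousWithinAt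
  have hlam2 : ContinuousOn (lam2 c1 c2 σ0 σ1) (USet c1 c2 σ0 σ1) := fun Ψ hΨ =>
    (contDiffAt_lam2 hΨ).continuousAt.continuousWithinAt
  have hsqd : ContinuousOn (sqD c1 c2 σ0 σ1) (USet c1 c2 σ0 σ1) :=
    (continuous_sqD c1 c2 σ0 σ1).continuousOn
  have hbf : ContinuousOn (bF c2 σ1) (USet c1 c2 σ0 σ1) := by
    have : Continuous (bF c2 σ1) := by unfold bF; fun_prop
    exact this.continuousOn
  have haf : ContinuousOn (aF c1 σ0) (USet c1 c2 σ0 σ1) := by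
    have : Continuous (aF c1 σ0) := by unfold aF; fun_prop
    exact this.continuousOn
  have hφ1 : ContinuousOn (fun Ψ : Fin 4 → ℝ => Ψ 1) (USet c1 c2 σ0 σ1) :=
    (continuous_apply 1).continuousOn
  have hq : ContinuousOn (qFn c1 c2 σ0 σ1) (USet c1 c2 σ0 σ1) :=
    (((hlam1.pow 2).sub hbf).div_const _)
  have hs : ContinuousOn (sFn c1 c2 σ0 σ1) (USet c1 c2 σ0 σ1) :=
    (((hlam2.pow 2).sub haf).div_const _)
  have hr3 : ContinuousOn (r3 c1 c2 σ0 σ1) (USet c1 c2 σ0 σ1) := by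
    rw [continuousOn_pi]
    intro i
    fin_cases i
    · exact (((hlam2.pow 2).sub hbf).div_const _)
    · exact hφ1
    · exact (hlam2.mul ((hlam2.pow 2).sub hbf)).div_const _
    · exact hlam2.mul hφ1
  have hcdq : ContDiffOn ℝ 1 (qFn c1 c2 σ0 σ1) (USet c1 c2 σ0 σ1) := fun Ψ hΨ =>
    (contDiffAt_qFn hΨ).contDiffWithinAt
  have hcdl1 : ContDiffOn ℝ 1 (lam1 c1 c2 σ0 σ1) (USet c1 c2 σ0 σ1) := fun Ψ hΨ =>
    (contDiffAt_lam1 hΨ).contDiffWithinAt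
  have hv1 : ContinuousOn (v1F c1 c2 σ0 σ1) (USet c1 c2 σ0 σ1) :=
    (hcdq.continuousOn_fderiv_of_isOpen hopen le_rfl).clm_apply hr3
  have hw : ContinuousOn (wF c1 c2 σ0 σ1) (USet c1 c2 σ0 σ1) :=
    (hcdl1.continuousOn_fderiv_of_isOpen hopen le_rfl).clm_apply hr3
  have hsne : ∀ Ψ ∈ USet c1 c2 σ0 σ1, sqD c1 c2 σ0 σ1 Ψ ≠ 0 := fun Ψ hΨ => (sqD_pos hΨ).ne'
  have hl2ne : ∀ Ψ ∈ USet c1 c2 σ0 σ1, lam2 c1 c2 σ0 σ1 Ψ ≠ 0 := fun Ψ hΨ => (lam2_pos hΨ).ne'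
  unfold GF
  exact ((hlam1.add hlam2).mul ((continuousOn_const.div hsqd) hsne)).mul
    (((hv1.add hs).add (((hlam1.mul hv1).add (hq.mul hw)).div hlam2 hl2ne)).add
      (((hs.mul (hw.add hlam1)).div hlam2 hl2ne)))

/-- sup-norm is bounded by the Euclidean norm. -/
lemma norm_le_eucNorm4 (Φ : Fin 4 → ℝ) : ‖Φ‖ ≤ eucNorm4 Φ := by
  have h0 : 0 ≤ eucNorm4 Φ := Real.sqrt_nonneg _
  rw [pi_norm_le_iff_of_nonneg h0]
  intro i
  rw [Real.norm_eq_abs]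
  have h1 : Φ i ^ 2 ≤ ∑ j, Φ j ^ 2 :=
    Finset.single_le_sum (f := fun j => Φ j ^ 2) (fun j _ => sq_nonneg _) (Finset.mem_univ i)
  calc |Φ i| = Real.sqrt (Φ i ^ 2) := (Real.sqrt_sq_eq_abs _).symm
    _ ≤ eucNorm4 Φ := Real.sqrt_le_sqrt h1

end Aux

/-- Uniform boundedness of the (potentially singular) coefficient
`γ²₁₃(Φ) = -(λ₁-λ₃) l₂ · (Dr₁(Φ) r₃(Φ))` on the punctured ball `{|Φ| < 2κ, φ₂ ≠ 0}`. -/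
theorem gamma_2_13_bounded (c1 c2 σ0 σ1 : ℝ) (hc2 : 0 < c2) (hc12 : c2 < c1) (hσ1 : σ1 ≠ 0) :
    ∃ κ > (0:ℝ), ∃ C > (0:ℝ), ∀ Φ : Fin 4 → ℝ, eucNorm4 Φ < 2 * κ → Φ 1 ≠ 0 →
      |(-(lam1 c1 c2 σ0 σ1 Φ - lam3 c1 c2 σ0 σ1 Φ)) *
          (l2 c1 c2 σ0 σ1 Φ ⬝ᵥ (jac (r1 c1 c2 σ0 σ1) Φ *ᵥ r3 c1 c2 σ0 σ1 Φ))| ≤ C := by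
  obtain ⟨r, hr, hball⟩ := Metric.isOpen_iff.1 (isOpen_USet c1 c2 σ0 σ1) 0
    (zero_mem_USet c1 c2 σ0 σ1 hc2 hc12)
  refine ⟨r / 4, by positivity, ?_⟩
  have hcomp : IsCompact (Metric.closedBall (0 : Fin 4 → ℝ) (r / 2)) := isCompact_closedBall _ _
  have hsub : Metric.closedBall (0 : Fin 4 → ℝ) (r / 2) ⊆ USet c1 c2 σ0 σ1 := by
    intro x hx
    apply hball
    rw [Metric.mem_ball, dist_zero_right]
    rw [Metric.mem_closedBall, dist_zero_right] at hx
    linarith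
  obtain ⟨C0, hC0⟩ := hcomp.exists_bound_of_continuousOn ((continuousOn_GF c1 c2 σ0 σ1).mono hsub)
  refine ⟨max C0 1, lt_of_lt_of_le one_pos (le_max_right _ _), ?_⟩
  intro Φ hΦn hφ2
  have hmem : Φ ∈ Metric.closedBall (0 : Fin 4 → ℝ) (r / 2) := by
    rw [Metric.mem_closedBall, dist_zero_right]
    have h1 := norm_le_eucNorm4 Φ
    have h2 : eucNorm4 Φ < 2 * (r / 4) := hΦn
    linarith
  have hU := hsub hmem
  rw [gamma_eq_GF hσ1 hU hφ2]
  calc |GF c1 c2 σ0 σ1 Φ| ≤ C0 := by simpa [Real.norm_eq_abs] using hC0 Φ hmem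
    _ ≤ max C0 1 := le_max_left _ _

end ElasticIP
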